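/- Let (X, μ) be a measure space, and let q⁻ and q′ be measurable sets with 0 < μ(q⁻) < ∞ and 0 < μ(q′) < ∞ such that ω := q⁻ ∩ q′ satisfies μ(ω) > 0. Set q := q⁻ ∪ q′. Then every v ∈ L²(q) satisfies ‖v − ⟨v⟩_q‖²_{L²(q)} ≤ (1 + 2 μ(q′)/μ(ω)) ( ‖v − ⟨v⟩_{q⁻}‖²_{L²(q⁻)} + ‖v − ⟨v⟩_{q′}‖²_{L²(q′)} ). -/

import Mathlib

set_option maxHeartbeats 1000000


open MeasureTheory Set

/-- The integral mean `⟨v⟩_A = μ(A)⁻¹ ∫_A v dμ`. -/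
noncomputable def setMean {X : Type*} [MeasurableSpace X] (μ : Measure X)
    (A : Set X) (v : X → ℝ) : ℝ :=
  (μ A).toReal⁻¹ * ∫ x in A, v x ∂μ

/-- Expansion identity: `∫_S (v-c)² = ∫_S (v - ⟨v⟩_S)² + μ(S) (⟨v⟩_S - c)²`. -/
lemma setMean_expand {X : Type*} [MeasurableSpace X] (μ : Measure X) (S : Set X)
    (hS0 : 0 < μ S) (hSfin : μ S < ⊤) (v : X → ℝ)
    (hv : MemLp v 2 (μ.restrict S)) (c : ℝ) :
    ∫ x in S, (v x - c) ^ 2 ∂μ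
      = (∫ x in S, (v x - setMean μ S v) ^ 2 ∂μ)
        + (μ S).toReal * (setMean μ S v - c) ^ 2 := by
  set m := setMean μ S v with hm
  haveI : IsFiniteMeasure (μ.restrict S) :=
    ⟨by rwa [Measure.restrict_apply_univ]⟩
  have hμS : (μ S).toReal ≠ 0 := by
    simp [ENNReal.toReal_eq_zero_iff, hS0.ne', hSfin.ne]
  have hvint : Integrable v (μ.restrict S) :=
    hv.integrable (by norm_num)
  have hvm2 : Integrable (fun x => (v x - m) ^ 2) (μ.restrict S) :=
    (hv.sub (memLp_const m)).integrable_sq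
  have hvm1 : Integrable (fun x => v x - m) (μ.restrict S) :=
    hvint.sub (integrable_const m)
  have hmean : ∫ x in S, (v x - m) ∂μ = 0 := by
    rw [integral_sub hvint (integrable_const m)]
    rw [setIntegral_const, smul_eq_mul, hm, setMean]
    field_simp
    simp [Measure.real]
  have key : ∀ x, (v x - c) ^ 2
      = (v x - m) ^ 2 + (2 * (m - c)) * (v x - m) + (m - c) ^ 2 := fun x => by ring
  calc ∫ x in S, (v x - c) ^ 2 ∂μ
      = ∫ x in S, ((v x - m) ^ 2 + (2 * (m - c)) * (v x - m) + (m - c) ^ 2) ∂μ := by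
        simp_rw [key]
    _ = (∫ x in S, (v x - m) ^ 2 ∂μ) + (∫ x in S, (2 * (m - c)) * (v x - m) ∂μ)
          + ∫ x in S, (m - c) ^ 2 ∂μ := by
        rw [integral_add (f := fun x => (v x - m) ^ 2 + (2 * (m - c)) * (v x - m))
            (g := fun _ => (m - c) ^ 2) (hvm2.add (hvm1.const_mul _)) (integrable_const _),
          integral_add (f := fun x => (v x - m) ^ 2)
            (g := fun x => (2 * (m - c)) * (v x - m)) hvm2 (hvm1.const_mul _)]
    _ = (∫ x in S, (v x - m) ^ 2 ∂μ) + (μ S).toReal * (m - c) ^ 2 := by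
        rw [integral_const_mul, hmean, setIntegral_const, smul_eq_mul]
        simp only [Measure.real]
        ring

theorem stmt_4 {X : Type*} [MeasurableSpace X] (μ : Measure X)
    (qm qp : Set X) (hqmMeas : MeasurableSet qm) (hqpMeas : MeasurableSet qp)
    (hqm0 : 0 < μ qm) (hqmfin : μ qm < ⊤)
    (hqp0 : 0 < μ qp) (hqpfin : μ qp < ⊤)
    (hω : 0 < μ (qm ∩ qp))
    (v : X → ℝ) (hv : MemLp v 2 (μ.restrict (qm ∪ qp))) :
    (∫ x in qm ∪ qp, (v x - setMean μ (qm ∪ qp) v) ^ 2 ∂μ)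
      ≤ (1 + 2 * (μ qp).toReal / (μ (qm ∩ qp)).toReal) *
          ((∫ x in qm, (v x - setMean μ qm v) ^ 2 ∂μ)
            + ∫ x in qp, (v x - setMean μ qp v) ^ 2 ∂μ) := by
  set q := qm ∪ qp with hq
  set ω := qm ∩ qp with hωdef
  have hq0 : 0 < μ q := hqm0.trans_le (measure_mono subset_union_left)
  have hqfin : μ q < ⊤ :=
    (measure_union_le _ _).trans_lt (ENNReal.add_lt_top.2 ⟨hqmfin, hqpfin⟩)
  have hωfin : μ ω < ⊤ := (measure_mono inter_subset_right).trans_lt hqpfin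
  have hvm : MemLp v 2 (μ.restrict qm) :=
    hv.mono_measure (Measure.restrict_mono subset_union_left le_rfl)
  have hvp : MemLp v 2 (μ.restrict qp) :=
    hv.mono_measure (Measure.restrict_mono subset_union_right le_rfl)
  have hvω : MemLp v 2 (μ.restrict ω) :=
    hv.mono_measure (Measure.restrict_mono (inter_subset_left.trans subset_union_left) le_rfl)
  haveI : IsFiniteMeasure (μ.restrict qm) := ⟨by rwa [Measure.restrict_apply_univ]⟩
  haveI : IsFiniteMeasure (μ.restrict qp) := ⟨by rwa [Measure.restrict_apply_univ]⟩
  haveI : IsFiniteMeasure (μ.restrict ω) := ⟨by rwa [Measure.restrict_apply_univ]⟩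
  set mq := setMean μ q v
  set mm := setMean μ qm v
  set mp := setMean μ qp v
  set A := ∫ x in qm, (v x - mm) ^ 2 ∂μ with hA
  set B := ∫ x in qp, (v x - mp) ^ 2 ∂μ with hB
  have hA0 : 0 ≤ A := integral_nonneg fun x => sq_nonneg _
  have hB0 : 0 ≤ B := integral_nonneg fun x => sq_nonneg _
  -- integrability of the various squares
  have intm : Integrable (fun x => (v x - mm) ^ 2) (μ.restrict qm) :=
    (hvm.sub (memLp_const mm)).integrable_sq
  have intpm : Integrable (fun x => (v x - mm) ^ 2) (μ.restrict qp) :=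
    (hvp.sub (memLp_const mm)).integrable_sq
  have intp : Integrable (fun x => (v x - mp) ^ 2) (μ.restrict qp) :=
    (hvp.sub (memLp_const mp)).integrable_sq
  have intωm : Integrable (fun x => (v x - mm) ^ 2) (μ.restrict ω) :=
    (hvω.sub (memLp_const mm)).integrable_sq
  have intωp : Integrable (fun x => (v x - mp) ^ 2) (μ.restrict ω) :=
    (hvω.sub (memLp_const mp)).integrable_sq
  -- Step 1: mean minimizes
  have step1 : (∫ x in q, (v x - mq) ^ 2 ∂μ) ≤ ∫ x in q, (v x - mm) ^ 2 ∂μ := by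
    rw [setMean_expand μ q hq0 hqfin v hv mm]
    exact le_add_of_nonneg_right (by positivity)
  -- Step 2: subadditivity over the union
  have step2 : (∫ x in q, (v x - mm) ^ 2 ∂μ)
      ≤ (∫ x in qm, (v x - mm) ^ 2 ∂μ) + ∫ x in qp, (v x - mm) ^ 2 ∂μ := by
    have hle : μ.restrict q ≤ μ.restrict qm + μ.restrict qp :=
      Measure.restrict_union_le qm qp
    have := integral_mono_measure hle
      (f := fun x => (v x - mm) ^ 2)
      (ae_of_all _ fun x => sq_nonneg _)
      (intm.add_measure intpm)
    rwa [integral_add_measure intm intpm] at this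
  -- Step 3: expansion on qp
  have step3 : (∫ x in qp, (v x - mm) ^ 2 ∂μ)
      = B + (μ qp).toReal * (mp - mm) ^ 2 :=
    setMean_expand μ qp hqp0 hqpfin v hvp mm
  -- Step 4: mean difference bound via the overlap
  set d := mp - mm with hd
  have hωr : (0 : ℝ) < (μ ω).toReal := ENNReal.toReal_pos hω.ne' hωfin.ne
  have step4 : d ^ 2 * (μ ω).toReal ≤ 2 * A + 2 * B := by
    have h1 : (μ ω).toReal * d ^ 2
        ≤ ∫ x in ω, (2 * (v x - mm) ^ 2 + 2 * (v x - mp) ^ 2) ∂μ := by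
      have hpt : (fun _ : X => d ^ 2) ≤ fun x => 2 * (v x - mm) ^ 2 + 2 * (v x - mp) ^ 2 := by
        intro x
        show d ^ 2 ≤ 2 * (v x - mm) ^ 2 + 2 * (v x - mp) ^ 2
        have hdx : d = (v x - mm) - (v x - mp) := by rw [hd]; ring
        rw [hdx]
        nlinarith [sq_nonneg ((v x - mm) + (v x - mp))]
      have h1' := integral_mono (μ := μ.restrict ω) (integrable_const (d ^ 2))
        ((intωm.const_mul 2).add (intωp.const_mul 2)) hpt
      rwa [setIntegral_const, smul_eq_mul] at h1'
    have h2 : (∫ x in ω, (2 * (v x - mm) ^ 2 + 2 * (v x - mp) ^ 2) ∂μ)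
        = 2 * (∫ x in ω, (v x - mm) ^ 2 ∂μ) + 2 * ∫ x in ω, (v x - mp) ^ 2 ∂μ := by
      rw [integral_add (f := fun x => 2 * (v x - mm) ^ 2) (g := fun x => 2 * (v x - mp) ^ 2)
          (intωm.const_mul 2) (intωp.const_mul 2),
        integral_const_mul, integral_const_mul]
    have h3 : (∫ x in ω, (v x - mm) ^ 2 ∂μ) ≤ A :=
      setIntegral_mono_set intm (ae_of_all _ fun x => sq_nonneg _)
        (HasSubset.Subset.eventuallyLE inter_subset_left)
    have h4 : (∫ x in ω, (v x - mp) ^ 2 ∂μ) ≤ B :=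
      setIntegral_mono_set intp (ae_of_all _ fun x => sq_nonneg _)
        (HasSubset.Subset.eventuallyLE inter_subset_right)
    nlinarith
  -- combine
  have hqpR : (0 : ℝ) ≤ (μ qp).toReal := ENNReal.toReal_nonneg
  have main : (∫ x in q, (v x - mq) ^ 2 ∂μ)
      ≤ A + B + (μ qp).toReal * d ^ 2 := by
    calc (∫ x in q, (v x - mq) ^ 2 ∂μ)
        ≤ (∫ x in qm, (v x - mm) ^ 2 ∂μ) + ∫ x in qp, (v x - mm) ^ 2 ∂μ :=
          step1.trans step2
      _ = A + (B + (μ qp).toReal * d ^ 2) := by rw [step3]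
      _ = A + B + (μ qp).toReal * d ^ 2 := by ring
  have hfinal : A + B + (μ qp).toReal * d ^ 2
      ≤ (1 + 2 * (μ qp).toReal / (μ ω).toReal) * (A + B) := by
    have : (μ qp).toReal * (d ^ 2 * (μ ω).toReal)
        ≤ (μ qp).toReal * (2 * A + 2 * B) :=
      mul_le_mul_of_nonneg_left step4 hqpR
    have h5 : (μ qp).toReal * d ^ 2 ≤ 2 * (μ qp).toReal * (A + B) / (μ ω).toReal := by
      rw [le_div_iff₀ hωr]
      nlinarith
    have hexp : (1 + 2 * (μ qp).toReal / (μ ω).toReal) * (A + B)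
        = (A + B) + 2 * (μ qp).toReal * (A + B) / (μ ω).toReal := by
      field_simp
    rw [hexp]
    linarith
  exact main.trans hfinal
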